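/- Let L,K ∈ ℝⁿ with 0 < kᵢ < ℓᵢ, and let Λ be the lattice generated by the rows of the n×n matrix G with Gᵢᵢ = ℓᵢ, G_{i,i+1} = −k_{i+1} for 1 ≤ i ≤ n−1, G_{n,1} = −k₁, and all other entries 0. Then the translates {V + S_{L,K} : V ∈ Λ} tile ℝⁿ: they have pairwise disjoint interiors and their closures cover ℝⁿ. -/

import Mathlib

set_option linter.unusedSectionVars false
open Fin.NatCast Fin.CommRing

section ChairAux
variable {n : ℕ} [NeZero n] (L K x : Fin n → ℝ)

noncomputable def chairStep (j : Fin n) (m : ℤ) : ℤ := ⌊(x j + m * K j) / L j⌋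

def chairResid (lam : Fin n → ℤ) (j : Fin n) : ℝ :=
  x j - ((lam j : ℝ) * L j - (lam (j - 1) : ℝ) * K j)

def chairBox (lam : Fin n → ℤ) : Prop :=
  ∀ j, 0 ≤ chairResid L K x lam j ∧ chairResid L K x lam j < L j

def chairCorner (lam : Fin n → ℤ) : Prop :=
  ∃ j, chairResid L K x lam j < L j - K j

lemma chairStep_mono (hK : ∀ j, 0 < K j) (hKL : ∀ j, K j < L j) (j : Fin n) :
    Monotone (chairStep L K x j) := by
  intro a b hab
  apply Int.floor_mono
  have hL : 0 < L j := (hK j).trans (hKL j)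
  have h1 : (a : ℝ) ≤ b := by exact_mod_cast hab
  have : x j + (a:ℝ) * K j ≤ x j + (b:ℝ) * K j := by nlinarith [hK j]
  exact div_le_div_of_nonneg_right this hL.le |>.trans_eq rfl

lemma chairStep_add_le (hK : ∀ j, 0 < K j) (hKL : ∀ j, K j < L j) (j : Fin n) (m d : ℤ)
    (hd : 0 ≤ d) : chairStep L K x j (m + d) ≤ chairStep L K x j m + d := by
  have hL : 0 < L j := (hK j).trans (hKL j)
  have hd' : (0:ℝ) ≤ d := by exact_mod_cast hd
  have key : (x j + (m + d : ℤ) * K j) / L j ≤ (x j + m * K j) / L j + d := by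
    rw [div_add' _ _ _ (ne_of_gt hL)]
    apply div_le_div_of_nonneg_right ?_ hL.le |>.trans_eq rfl
    push_cast
    nlinarith [hKL j, hK j]
  calc chairStep L K x j (m + d) ≤ ⌊(x j + m * K j) / L j + (d:ℝ)⌋ := Int.floor_mono key
    _ = chairStep L K x j m + d := Int.floor_add_intCast _ _

/-- Box condition at `j` is the floor equation. -/
lemma chairBox_iff (hK : ∀ j, 0 < K j) (hKL : ∀ j, K j < L j) (lam : Fin n → ℤ) (j : Fin n) :
    (0 ≤ chairResid L K x lam j ∧ chairResid L K x lam j < L j) ↔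
      chairStep L K x j (lam (j - 1)) = lam j := by
  have hL : 0 < L j := (hK j).trans (hKL j)
  simp only [chairResid]
  rw [chairStep, Int.floor_eq_iff, le_div_iff₀ hL, div_lt_iff₀ hL]
  push_cast
  constructor <;> rintro ⟨h1, h2⟩ <;> constructor <;> nlinarith



lemma fin_sub_one_val (hn : 2 ≤ n) (j : Fin n) :
    ((j - 1 : Fin n) : ℕ) = if (j : ℕ) = 0 then n - 1 else (j : ℕ) - 1 := by
  have h1 : ((1 : Fin n) : ℕ) = 1 := by rw [Fin.val_one']; exact Nat.mod_eq_of_lt (by omega)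
  rw [Fin.sub_def]
  simp only [h1]
  rcases Nat.eq_zero_or_pos (j : ℕ) with h0 | h0
  · rw [h0, if_pos rfl]
    simpa using Nat.mod_eq_of_lt (by omega)
  · have hjn := j.isLt
    have e : n - 1 + (j : ℕ) = n + ((j : ℕ) - 1) := by omega
    rw [if_neg (by omega)]
    simp only [e, Nat.add_mod_left]
    exact Nat.mod_eq_of_lt (by omega)

noncomputable def chairChain (m : ℤ) : ℕ → ℤ
  | 0 => m
  | t + 1 => chairStep L K x (((t + 1 : ℕ)) : Fin n) (chairChain m t)

lemma chairChain_mono (hK : ∀ j, 0 < K j) (hKL : ∀ j, K j < L j) (t : ℕ) {a b : ℤ}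
    (hab : a ≤ b) : chairChain L K x a t ≤ chairChain L K x b t := by
  induction t with
  | zero => exact hab
  | succ t ih => exact chairStep_mono L K x hK hKL _ ih

lemma chairChain_succ_le (hK : ∀ j, 0 < K j) (hKL : ∀ j, K j < L j) (m : ℤ) (t : ℕ) :
    chairChain L K x (m + 1) t ≤ chairChain L K x m t + 1 := by
  induction t with
  | zero => exact le_refl _
  | succ t ih =>
    calc chairChain L K x (m + 1) (t + 1)
        = chairStep L K x _ (chairChain L K x (m + 1) t) := rfl
      _ ≤ chairStep L K x _ (chairChain L K x m t + 1) :=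
          chairStep_mono L K x hK hKL _ ih
      _ ≤ chairStep L K x _ (chairChain L K x m t) + 1 :=
          chairStep_add_le L K x hK hKL _ _ 1 zero_le_one
      _ = chairChain L K x m (t + 1) + 1 := rfl

lemma chairStep_lt_self (hK : ∀ j, 0 < K j) (hKL : ∀ j, K j < L j) (j : Fin n) (m : ℤ)
    (hm : x j < m * (L j - K j)) : chairStep L K x j m < m := by
  have hL : 0 < L j := (hK j).trans (hKL j)
  rw [chairStep, Int.floor_lt, div_lt_iff₀ hL]
  push_cast
  nlinarith

lemma chairStep_gt_self (hK : ∀ j, 0 < K j) (hKL : ∀ j, K j < L j) (j : Fin n) (m : ℤ)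
    (hm : m * (L j - K j) ≤ x j - L j) : m < chairStep L K x j m := by
  have hL : 0 < L j := (hK j).trans (hKL j)
  rw [chairStep, Int.lt_iff_add_one_le, Int.le_floor, le_div_iff₀ hL]
  push_cast
  nlinarith

lemma chairChain_le_self (hK : ∀ j, 0 < K j) (hKL : ∀ j, K j < L j) (m : ℤ)
    (hm : ∀ j, x j < m * (L j - K j)) (t : ℕ) : chairChain L K x m t ≤ m := by
  induction t with
  | zero => exact le_refl m
  | succ t ih =>
    have h1 : chairChain L K x m (t + 1) ≤ chairStep L K x _ m :=
      chairStep_mono L K x hK hKL _ ih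
    exact h1.trans (chairStep_lt_self L K x hK hKL _ m (hm _)).le

lemma chairChain_lt_self (hK : ∀ j, 0 < K j) (hKL : ∀ j, K j < L j) (m : ℤ)
    (hm : ∀ j, x j < m * (L j - K j)) (t : ℕ) : chairChain L K x m (t + 1) < m := by
  have h1 : chairChain L K x m (t + 1) ≤ chairStep L K x _ m :=
    chairStep_mono L K x hK hKL _ (chairChain_le_self L K x hK hKL m hm t)
  exact h1.trans_lt (chairStep_lt_self L K x hK hKL _ m (hm _))

lemma chairChain_ge_self (hK : ∀ j, 0 < K j) (hKL : ∀ j, K j < L j) (m : ℤ)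
    (hm : ∀ j, m * (L j - K j) ≤ x j - L j) (t : ℕ) : m ≤ chairChain L K x m t := by
  induction t with
  | zero => exact le_refl m
  | succ t ih =>
    have h1 : chairStep L K x _ m ≤ chairChain L K x m (t + 1) :=
      chairStep_mono L K x hK hKL _ ih
    exact (chairStep_gt_self L K x hK hKL _ m (hm _)).le.trans h1

lemma int_ivt (g : ℤ → ℤ) (hg : ∀ m, g m - 1 ≤ g (m + 1)) :
    ∀ N : ℕ, ∀ a : ℤ, 0 ≤ g a → g (a + N) ≤ 0 → ∃ m, g m = 0 := by
  intro N
  induction N with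
  | zero =>
    intro a h1 h2
    exact ⟨a, le_antisymm (by simpa using h2) h1⟩
  | succ N ih =>
    intro a h1 h2
    rcases eq_or_lt_of_le h1 with he | hlt
    · exact ⟨a, he.symm⟩
    · refine ih (a + 1) (by have := hg a; omega) ?_
      have e : a + 1 + (N : ℤ) = a + ((N : ℕ) + 1 : ℕ) := by push_cast; ring
      rw [e]; exact h2

theorem chair_exists (hn : 2 ≤ n) (hK : ∀ j, 0 < K j) (hKL : ∀ j, K j < L j) :
    ∃ lam : Fin n → ℤ, chairBox L K x lam ∧ chairCorner L K x lam := by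
  have hne : (Finset.univ : Finset (Fin n)).Nonempty := ⟨0, Finset.mem_univ 0⟩
  have hLK : ∀ j, (0:ℝ) < L j - K j := fun j => sub_pos.mpr (hKL j)
  set B1 : ℝ := Finset.univ.sup' hne (fun j => x j / (L j - K j)) with hB1
  set M : ℤ := ⌊B1⌋ + 1 with hM
  have hMgt : ∀ m : ℤ, M ≤ m → ∀ j, x j < m * (L j - K j) := by
    intro m hm j
    have h1 : x j / (L j - K j) ≤ B1 := by
      rw [hB1]; exact Finset.le_sup' (fun j => x j / (L j - K j)) (Finset.mem_univ j)
    have h2 : B1 < (M:ℝ) := by rw [hM]; push_cast; exact Int.lt_floor_add_one B1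
    have h3 : (M : ℝ) ≤ (m:ℝ) := by exact_mod_cast hm
    rw [div_le_iff₀ (hLK j)] at h1
    nlinarith [hLK j]
  set B2 : ℝ := Finset.univ.inf' hne (fun j => (x j - L j) / (L j - K j)) with hB2
  set m0 : ℤ := min (⌊B2⌋) (M - 1) with hm0
  have hm0le : ∀ j, (m0 : ℝ) * (L j - K j) ≤ x j - L j := by
    intro j
    have h1 : B2 ≤ (x j - L j) / (L j - K j) := by
      rw [hB2]; exact Finset.inf'_le (fun j => (x j - L j) / (L j - K j)) (Finset.mem_univ j)
    have h2 : (m0 : ℝ) ≤ B2 := by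
      have : (m0:ℝ) ≤ ((⌊B2⌋:ℤ):ℝ) := by exact_mod_cast min_le_left (⌊B2⌋) (M-1)
      exact this.trans (Int.floor_le B2)
    exact (le_div_iff₀ (hLK j)).mp (h2.trans h1)
  have hm0M : m0 ≤ M := le_trans (min_le_right _ _) (by omega)
  set F : ℤ → ℤ := fun m => chairChain L K x m n with hF
  have hFmono : ∀ a b : ℤ, a ≤ b → F a ≤ F b :=
    fun a b hab => chairChain_mono L K x hK hKL n hab
  have hn1 : n - 1 + 1 = n := by omega
  have hFm0 : m0 ≤ F m0 :=
    chairChain_ge_self L K x hK hKL m0 (fun j => hm0le j) n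
  have hFM : ∀ m, M ≤ m → F m < m := by
    intro m hm
    have h := chairChain_lt_self L K x hK hKL m (hMgt m hm) (n-1)
    rw [hn1] at h
    exact h
  have hfix : ∃ m, F m = m := by
    set g : ℤ → ℤ := fun m => F m - m with hg
    have hgs : ∀ m, g m - 1 ≤ g (m + 1) := by
      intro m
      have := hFmono m (m+1) (by omega)
      simp only [hg]
      omega
    have h1 : 0 ≤ g m0 := by simp only [hg]; omega
    have h2 : g (m0 + ((M - m0).toNat : ℤ)) ≤ 0 := by
      have e : m0 + ((M - m0).toNat : ℤ) = M := by omega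
      rw [e]
      have := hFM M le_rfl
      simp only [hg]
      omega
    obtain ⟨m, hm⟩ := int_ivt g hgs (M - m0).toNat m0 h1 h2
    refine ⟨m, ?_⟩
    simp only [hg] at hm
    omega
  obtain ⟨ms, hms, hmax⟩ := Int.exists_greatest_of_bdd (P := fun m => F m = m)
    ⟨M, fun z hz => by
      by_contra hc
      push_neg at hc
      exact absurd hz (hFM z hc.le).ne⟩ hfix
  set lam : Fin n → ℤ := fun j => chairChain L K x ms (j : ℕ) with hlam
  have hvalcast : ∀ t : ℕ, t < n → ((((t:ℕ)) : Fin n) : ℕ) = t := by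
    intro t ht
    rw [Fin.val_natCast]
    exact Nat.mod_eq_of_lt ht
  -- key: lam at the cast of t+1 and its predecessor, for t+1 ≤ n
  have hkey : ∀ t : ℕ, t + 1 ≤ n →
      lam (((t+1 : ℕ)) : Fin n) = chairChain L K x ms (t+1) ∧
      lam ((((t+1 : ℕ)) : Fin n) - 1) = chairChain L K x ms t := by
    intro t ht
    rcases eq_or_lt_of_le ht with he | hlt
    · have hv : ((((t+1:ℕ)) : Fin n) : ℕ) = 0 := by
        rw [Fin.val_natCast, he, Nat.mod_self]
      constructor
      · show chairChain L K x ms ((((t+1:ℕ)) : Fin n) : ℕ) = _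
        rw [hv]
        show ms = chairChain L K x ms (t+1)
        rw [he]
        exact hms.symm
      · show chairChain L K x ms (((((t+1:ℕ)) : Fin n) - 1 : Fin n) : ℕ) = _
        rw [fin_sub_one_val hn, hv, if_pos rfl]
        congr 1
        omega
    · have hv : ((((t+1:ℕ)) : Fin n) : ℕ) = t+1 := hvalcast _ hlt
      constructor
      · show chairChain L K x ms ((((t+1:ℕ)) : Fin n) : ℕ) = _
        rw [hv]
      · show chairChain L K x ms (((((t+1:ℕ)) : Fin n) - 1 : Fin n) : ℕ) = _
        rw [fin_sub_one_val hn, hv, if_neg (by omega)]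
        rfl
  have hstep_eq : ∀ j : Fin n, chairStep L K x j (lam (j - 1)) = lam j := by
    intro j
    rcases Nat.eq_zero_or_pos (j : ℕ) with h0 | h0
    · have hj : j = (((n - 1 + 1 : ℕ)) : Fin n) := by
        apply Fin.ext
        rw [Fin.val_natCast, hn1, Nat.mod_self, h0]
      obtain ⟨h1, h2⟩ := hkey (n-1) (by omega)
      rw [hj, h2, h1]
      rfl
    · obtain ⟨t, ht⟩ : ∃ t, (j : ℕ) = t + 1 := ⟨(j:ℕ) - 1, by omega⟩
      have hj : j = (((t + 1 : ℕ)) : Fin n) := by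
        apply Fin.ext
        rw [Fin.val_natCast, ht, Nat.mod_eq_of_lt (ht ▸ j.isLt)]
      obtain ⟨h1, h2⟩ := hkey t (by have := j.isLt; omega)
      rw [hj, h2, h1]
      rfl
  have hbox : chairBox L K x lam := by
    intro j
    rw [chairBox_iff L K x hK hKL]
    exact hstep_eq j
  refine ⟨lam, hbox, ?_⟩
  by_contra hcor
  rw [chairCorner] at hcor
  push_neg at hcor
  -- shift lemma
  have hshift : ∀ t : ℕ, t ≤ n → chairChain L K x (ms + 1) t = chairChain L K x ms t + 1 := by
    intro t
    induction t with
    | zero => intro _; rfl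
    | succ t ih =>
      intro ht
      have iht := ih (by omega)
      obtain ⟨h1, h2⟩ := hkey t ht
      have hup : chairChain L K x (ms + 1) (t+1) ≤ chairChain L K x ms (t+1) + 1 := by
        show chairStep L K x _ (chairChain L K x (ms+1) t) ≤ _
        rw [iht]
        exact chairStep_add_le L K x hK hKL _ _ 1 zero_le_one
      have hlow : chairChain L K x ms (t+1) + 1 ≤ chairChain L K x (ms + 1) (t+1) := by
        show _ ≤ chairStep L K x (((t+1:ℕ)) : Fin n) (chairChain L K x (ms+1) t)
        rw [iht, ← h1, ← h2]
        set j := (((t+1:ℕ)) : Fin n)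
        have hres := hcor j
        have hboxj := hbox j
        rw [chairResid] at hres
        have hL : (0:ℝ) < L j := (hK j).trans (hKL j)
        rw [chairStep, Int.le_floor, le_div_iff₀ hL]
        push_cast
        nlinarith
      omega
  have : F (ms + 1) = ms + 1 := by
    have h1 := hshift n le_rfl
    have h2 : chairChain L K x ms n = ms := hms
    show chairChain L K x (ms + 1) n = ms + 1
    omega
  have := hmax (ms + 1) this
  omega

theorem chair_unique_aux (hn : 2 ≤ n) (hK : ∀ j, 0 < K j) (hKL : ∀ j, K j < L j)
    (lam mu : Fin n → ℤ) (h0 : lam 0 ≤ mu 0)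
    (hbl : chairBox L K x lam) (hbm : chairBox L K x mu)
    (hcl : chairCorner L K x lam) : lam = mu := by
  have sl : ∀ j, chairStep L K x j (lam (j-1)) = lam j :=
    fun j => (chairBox_iff L K x hK hKL lam j).mp (hbl j)
  have sm : ∀ j, chairStep L K x j (mu (j-1)) = mu j :=
    fun j => (chairBox_iff L K x hK hKL mu j).mp (hbm j)
  have hsub : ∀ t : ℕ, (((t+1 : ℕ)) : Fin n) - 1 = ((t : ℕ) : Fin n) := by
    intro t; push_cast; ring
  have hle : ∀ t : ℕ, lam ((t : ℕ) : Fin n) ≤ mu ((t : ℕ) : Fin n) := by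
    intro t
    induction t with
    | zero => simpa using h0
    | succ t ih =>
      rw [← sl, ← sm, hsub]
      exact chairStep_mono L K x hK hKL _ ih
  have hle' : ∀ j, lam j ≤ mu j := fun j => by
    have := hle (j : ℕ)
    rwa [Fin.cast_val_eq_self] at this
  have hd : ∀ j, mu j - lam j ≤ mu (j-1) - lam (j-1) := by
    intro j
    have h2 : chairStep L K x j (mu (j-1)) ≤ lam j + (mu (j-1) - lam (j-1)) := by
      have e : mu (j-1) = lam (j-1) + (mu (j-1) - lam (j-1)) := by ring
      calc chairStep L K x j (mu (j-1))
          = chairStep L K x j (lam (j-1) + (mu (j-1) - lam (j-1))) := by rw [← e]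
        _ ≤ chairStep L K x j (lam (j-1)) + (mu (j-1) - lam (j-1)) :=
            chairStep_add_le L K x hK hKL _ _ _ (by have := hle' (j-1); omega)
        _ = lam j + (mu (j-1) - lam (j-1)) := by rw [sl]
    rw [sm] at h2
    omega
  set e : ℕ → ℤ := fun t => mu ((t : ℕ) : Fin n) - lam ((t : ℕ) : Fin n) with he
  have hanti : Antitone e := by
    apply antitone_nat_of_succ_le
    intro t
    have := hd (((t+1 : ℕ)) : Fin n)
    rwa [hsub] at this
  have hen : e n = e 0 := by
    simp only [he, Nat.cast_zero, Fin.natCast_self]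
  have hconst : ∀ j : Fin n, mu j - lam j = mu 0 - lam 0 := by
    intro j
    have h1 : e n ≤ e (j : ℕ) := hanti (le_of_lt j.isLt)
    have h2 : e (j : ℕ) ≤ e 0 := hanti (Nat.zero_le _)
    have h3 : e (j : ℕ) = e 0 := le_antisymm h2 (hen ▸ h1)
    have := h3
    simp only [he, Nat.cast_zero, Fin.cast_val_eq_self] at this
    exact this
  rcases eq_or_lt_of_le h0 with heq | hlt
  · funext j
    have := hconst j
    rw [← heq] at this
    omega
  · exfalso
    obtain ⟨j0, hj0⟩ := hcl
    have hbm0 := (hbm j0).1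
    have e1 : mu j0 = lam j0 + (mu 0 - lam 0) := by have := hconst j0; omega
    have e2 : mu (j0 - 1) = lam (j0 - 1) + (mu 0 - lam 0) := by have := hconst (j0 - 1); omega
    rw [chairResid] at hbm0 hj0
    rw [e1, e2] at hbm0
    push_cast at hbm0
    have hc0 : (1 : ℤ) ≤ mu 0 - lam 0 := by omega
    have hc1 : (1 : ℝ) ≤ ((mu 0 - lam 0 : ℤ) : ℝ) := by exact_mod_cast hc0
    push_cast at hc1
    nlinarith [hKL j0, hK j0]

theorem chair_unique (hn : 2 ≤ n) (hK : ∀ j, 0 < K j) (hKL : ∀ j, K j < L j)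
    (lam mu : Fin n → ℤ) (hbl : chairBox L K x lam) (hcl : chairCorner L K x lam)
    (hbm : chairBox L K x mu) (hcm : chairCorner L K x mu) : lam = mu := by
  rcases le_total (lam 0) (mu 0) with h | h
  · exact chair_unique_aux L K x hn hK hKL lam mu h hbl hbm hcl
  · exact (chair_unique_aux L K x hn hK hKL mu lam h hbm hbl hcm).symm

end ChairAux


/-- The lattice generated by the rows of the matrix with diagonal `ℓᵢ`,
superdiagonal `−k_{i+1}`, and corner `−k₁` tiles `ℝⁿ` with the chair `S_{L,K}`:
translates have pairwise disjoint interiors and their closures cover `ℝⁿ`. -/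
theorem chair_lattice_tiling_real (n : ℕ) (hn : 2 ≤ n) (L K : Fin n → ℝ)
    (h : ∀ i, 0 < K i ∧ K i < L i) :
    let S : Set (Fin n → ℝ) :=
      {y | (∀ i, 0 ≤ y i ∧ y i < L i) ∧ ∃ j, y j < L j - K j}
    let V : Fin n → Fin n → ℝ := fun i j =>
      if j = i then L i else if (j : ℕ) = ((i : ℕ) + 1) % n then -(K j) else 0
    let Λ : Set (Fin n → ℝ) := {X | ∃ lam : Fin n → ℤ, X = ∑ i, lam i • V i}
    (∀ U ∈ Λ, ∀ W ∈ Λ, U ≠ W →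
        interior ((fun s => U + s) '' S) ∩ interior ((fun s => W + s) '' S) = ∅) ∧
      ∀ x : Fin n → ℝ, ∃ U ∈ Λ, x ∈ closure ((fun s => U + s) '' S) := by
  intro S V Λ
  haveI : NeZero n := ⟨by omega⟩
  have hK : ∀ j, 0 < K j := fun j => (h j).1
  have hKL : ∀ j, K j < L j := fun j => (h j).2
  have h1v : ((1 : Fin n) : ℕ) = 1 := by
    rw [Fin.val_one']; exact Nat.mod_eq_of_lt (by omega)
  have hrev : ∀ j i : Fin n, i = j - 1 → (j : ℕ) = ((i : ℕ) + 1) % n := by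
    intro j i hi
    subst hi
    rw [fin_sub_one_val hn]
    by_cases h0 : (j : ℕ) = 0
    · rw [if_pos h0, h0]
      have e : n - 1 + 1 = n := by omega
      rw [e, Nat.mod_self]
    · rw [if_neg h0]
      have hlt := j.isLt
      have e : (j : ℕ) - 1 + 1 = (j : ℕ) := by omega
      rw [e, Nat.mod_eq_of_lt hlt]
  have hfwd : ∀ j i : Fin n, (j : ℕ) = ((i : ℕ) + 1) % n → i = j - 1 := by
    intro j i hji
    have hj : j = i + 1 := by
      apply Fin.ext
      rw [Fin.add_def, h1v, hji]
    rw [hj]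
    ring
  have hnotboth : ∀ j i : Fin n, j = i → ¬ ((j : ℕ) = ((i : ℕ) + 1) % n) := by
    intro j i hji hc
    subst hji
    have hlt := j.isLt
    by_cases hl : (j : ℕ) + 1 < n
    · rw [Nat.mod_eq_of_lt hl] at hc; omega
    · have e : (j : ℕ) + 1 = n := by omega
      rw [e, Nat.mod_self] at hc; omega
  have hV : ∀ (lam : Fin n → ℤ) (j : Fin n),
      (∑ i, lam i • V i) j = (lam j : ℝ) * L j - (lam (j - 1) : ℝ) * K j := by
    intro lam j
    have e1 : (∑ i, lam i • V i) j = ∑ i, (lam i : ℝ) * V i j := by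
      rw [Finset.sum_apply]
      exact Finset.sum_congr rfl fun i _ => by rw [Pi.smul_apply, zsmul_eq_mul]
    rw [e1]
    have e2 : ∀ i : Fin n, (lam i : ℝ) * V i j =
        (if i = j then (lam i : ℝ) * L i else 0) +
          (if i = j - 1 then (lam i : ℝ) * (-(K j)) else 0) := by
      intro i
      simp only [V]
      by_cases hij : j = i
      · have hni2 : ¬ (i = j - 1) := fun hc => hnotboth j i hij (hrev j i hc)
        rw [if_pos hij, if_pos hij.symm, if_neg hni2, add_zero]

      · by_cases hic : (j : ℕ) = ((i : ℕ) + 1) % n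
        · rw [if_neg hij, if_pos hic, if_neg (fun hc : i = j => hij hc.symm),
            if_pos (hfwd j i hic), zero_add]
        · rw [if_neg hij, if_neg hic, if_neg (fun hc : i = j => hij hc.symm),
            if_neg (fun hc => hic (hrev j i hc)), mul_zero, zero_add]
    calc (∑ i, (lam i : ℝ) * V i j)
        = ∑ i, ((if i = j then (lam i : ℝ) * L i else 0) +
            (if i = j - 1 then (lam i : ℝ) * (-(K j)) else 0)) :=
          Finset.sum_congr rfl fun i _ => e2 i
      _ = (lam j : ℝ) * L j - (lam (j - 1) : ℝ) * K j := by
          rw [Finset.sum_add_distrib, Finset.sum_ite_eq', Finset.sum_ite_eq']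
          simp only [Finset.mem_univ, if_pos]
          ring
  have hmem : ∀ (lam : Fin n → ℤ) (z : Fin n → ℝ),
      z ∈ (fun s => (∑ i, lam i • V i) + s) '' S ↔
        chairBox L K z lam ∧ chairCorner L K z lam := by
    intro lam z
    have hres : ∀ j, chairResid L K z lam j = z j - (∑ i, lam i • V i) j := by
      intro j
      rw [chairResid, hV]
    constructor
    · rintro ⟨s, hsS, hz⟩
      have hz2 : (∑ i, lam i • V i) + s = z := hz
      have hz' : ∀ j, s j = z j - (∑ i, lam i • V i) j := by
        intro j
        rw [← hz2, Pi.add_apply]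
        ring
      obtain ⟨hs1, j0, hs2⟩ := hsS
      refine ⟨fun j => ?_, j0, ?_⟩
      · rw [hres, ← hz' j]
        exact hs1 j
      · rw [hres, ← hz' j0]
        exact hs2
    · rintro ⟨hb, j0, hc⟩
      refine ⟨fun j => z j - (∑ i, lam i • V i) j, ⟨fun j => ?_, ⟨j0, ?_⟩⟩, ?_⟩
      · show 0 ≤ z j - (∑ i, lam i • V i) j ∧ z j - (∑ i, lam i • V i) j < L j
        rw [← hres]
        exact hb j
      · show z j0 - (∑ i, lam i • V i) j0 < L j0 - K j0
        rw [← hres]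
        exact hc
      · show (∑ i, lam i • V i) + (fun j => z j - (∑ i, lam i • V i) j) = z
        funext j
        rw [Pi.add_apply]
        show (∑ i, lam i • V i) j + (z j - (∑ i, lam i • V i) j) = z j
        ring
  constructor
  · rintro U ⟨lamU, rfl⟩ W ⟨lamW, rfl⟩ hUW
    rw [Set.eq_empty_iff_forall_notMem]
    rintro z ⟨hz1, hz2⟩
    have h1 := (hmem lamU z).mp (interior_subset hz1)
    have h2 := (hmem lamW z).mp (interior_subset hz2)
    have heq : lamU = lamW :=
      chair_unique L K z hn hK hKL lamU lamW h1.1 h1.2 h2.1 h2.2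
    exact hUW (by rw [heq])
  · intro z
    obtain ⟨lam, hb, hc⟩ := chair_exists L K z hn hK hKL
    exact ⟨∑ i, lam i • V i, ⟨lam, rfl⟩,
      subset_closure ((hmem lam z).mpr ⟨hb, hc⟩)⟩
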